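/- Let a_1,...,a_n and b_1,...,b_n be positive integers such that gcd(a_{i_1}, a_{i_2}, a_{i_3}) = gcd(b_{i_1}, b_{i_2}, b_{i_3}) for all 1 ≤ i_1 < i_2 < i_3 ≤ n. Then (1/∏_{1≤i<j≤n} gcd(a_i,a_j)) · (a_1···a_n)/lcm(a_1,...,a_n) = (1/∏_{1≤i<j≤n} gcd(b_i,b_j)) · (b_1···b_n)/lcm(b_1,...,b_n), as an equality of positive rationals. -/

import Mathlib

open Finset

lemma count_lt (N x : ℕ) (hx : x ≤ N) :
    (∑ t ∈ Finset.range N, if t < x then 1 else 0) = x := by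
  rw [Finset.sum_boole]
  have : (Finset.range N).filter (fun t => t < x) = Finset.range x := by
    ext t
    simp only [Finset.mem_filter, Finset.mem_range]
    omega
  simp [this]

lemma pairsCard (n : ℕ) (X : Finset (Fin n)) (hX : X.card ≤ 2) :
    ((Finset.univ.filter (fun p : Fin n × Fin n => p.1 < p.2)).filter
      (fun p => p.1 ∈ X ∧ p.2 ∈ X)).card + (if X.Nonempty then 1 else 0) = X.card := by
  interval_cases hc : X.card
  · rw [Finset.card_eq_zero] at hc
    subst hc
    simp
  · rw [Finset.card_eq_one] at hc
    obtain ⟨x, rfl⟩ := hc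
    have : ((Finset.univ.filter (fun p : Fin n × Fin n => p.1 < p.2)).filter
      (fun p => p.1 ∈ ({x} : Finset (Fin n)) ∧ p.2 ∈ ({x} : Finset (Fin n)))) = ∅ := by
      apply Finset.filter_eq_empty_iff.mpr
      rintro ⟨u, v⟩ hp
      simp only [Finset.mem_filter, Finset.mem_univ, true_and] at hp
      simp only [Finset.mem_singleton]
      rintro ⟨rfl, rfl⟩
      exact absurd hp (lt_irrefl _)
    rw [this]
    simp
  · rw [Finset.card_eq_two] at hc
    obtain ⟨x, y, hxy, rfl⟩ := hc
    -- wlog x < y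
    have key : ∀ x y : Fin n, x < y →
        ((Finset.univ.filter (fun p : Fin n × Fin n => p.1 < p.2)).filter
          (fun p => p.1 ∈ ({x, y} : Finset (Fin n)) ∧ p.2 ∈ ({x, y} : Finset (Fin n)))) = {(x, y)} := by
      intro x y hlt
      ext ⟨u, v⟩
      simp only [Finset.mem_filter, Finset.mem_univ, true_and, Finset.mem_insert,
        Finset.mem_singleton, Prod.mk.injEq]
      constructor
      · rintro ⟨huv, (rfl | rfl), (rfl | rfl)⟩
        · exact absurd huv (lt_irrefl _)
        · exact ⟨rfl, rfl⟩
        · exact absurd hlt (not_lt.mpr huv.le)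
        · exact absurd huv (lt_irrefl _)
      · rintro ⟨rfl, rfl⟩
        exact ⟨hlt, Or.inl rfl, Or.inr rfl⟩
    rcases lt_or_gt_of_ne hxy with hlt | hlt
    · rw [key x y hlt]
      simp [Finset.insert_nonempty]
    · have hswap : ({x, y} : Finset (Fin n)) = {y, x} := Finset.pair_comm x y
      rw [hswap, key y x hlt]
      simp [Finset.insert_nonempty]

lemma subset_of_triples (n : ℕ) (A B : Finset (Fin n))
    (h3 : ∀ i j l : Fin n, i ≠ j → i ≠ l → j ≠ l →
      ((i ∈ A ∧ j ∈ A ∧ l ∈ A) ↔ (i ∈ B ∧ j ∈ B ∧ l ∈ B)))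
    (hA : 3 ≤ A.card) : A ⊆ B := by
  intro i hi
  have h2 : 1 < (A.erase i).card := by
    rw [Finset.card_erase_of_mem hi]; omega
  obtain ⟨j, hj, l, hl, hjl⟩ := Finset.one_lt_card.mp h2
  have hij : i ≠ j := fun e => (Finset.ne_of_mem_erase hj) e.symm
  have hil : i ≠ l := fun e => (Finset.ne_of_mem_erase hl) e.symm
  exact ((h3 i j l hij hil hjl).mp
    ⟨hi, Finset.mem_of_mem_erase hj, Finset.mem_of_mem_erase hl⟩).1

lemma perSet (n : ℕ) (A B : Finset (Fin n))
    (h3 : ∀ i j l : Fin n, i ≠ j → i ≠ l → j ≠ l →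
      ((i ∈ A ∧ j ∈ A ∧ l ∈ A) ↔ (i ∈ B ∧ j ∈ B ∧ l ∈ B))) :
    ((Finset.univ.filter (fun p : Fin n × Fin n => p.1 < p.2)).filter
        (fun p => p.1 ∈ B ∧ p.2 ∈ B)).card + (if B.Nonempty then 1 else 0) + A.card
    = ((Finset.univ.filter (fun p : Fin n × Fin n => p.1 < p.2)).filter
        (fun p => p.1 ∈ A ∧ p.2 ∈ A)).card + (if A.Nonempty then 1 else 0) + B.card := by
  by_cases hA : 3 ≤ A.card
  · have hAB : A ⊆ B := subset_of_triples n A B h3 hA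
    have hB : 3 ≤ B.card := le_trans hA (Finset.card_le_card hAB)
    have hBA : B ⊆ A := subset_of_triples n B A (fun i j l a b c => (h3 i j l a b c).symm) hB
    have : A = B := Finset.Subset.antisymm hAB hBA
    rw [this]
  · by_cases hB : 3 ≤ B.card
    · have hBA : B ⊆ A := subset_of_triples n B A (fun i j l a b c => (h3 i j l a b c).symm) hB
      exact absurd (le_trans hB (Finset.card_le_card hBA)) hA
    · have h1 := pairsCard n A (by omega)
      have h2 := pairsCard n B (by omega)
      omega

lemma tripleKey (n : ℕ) (e f : Fin n → ℕ)
    (h : ∀ i j l : Fin n, i < j → j < l →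
      min (e i) (min (e j) (e l)) = min (f i) (min (f j) (f l))) :
    (∑ p ∈ Finset.univ.filter (fun p : Fin n × Fin n => p.1 < p.2), min (f p.1) (f p.2))
      + Finset.univ.sup f + ∑ i, e i
    = (∑ p ∈ Finset.univ.filter (fun p : Fin n × Fin n => p.1 < p.2), min (e p.1) (e p.2))
      + Finset.univ.sup e + ∑ i, f i := by
  have h' : ∀ i j l : Fin n, i ≠ j → i ≠ l → j ≠ l →
      min (e i) (min (e j) (e l)) = min (f i) (min (f j) (f l)) := by
    intro i j l hij hil hjl
    rcases lt_trichotomy i j with h1 | h1 | h1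
    · rcases lt_trichotomy j l with h2 | h2 | h2
      · exact h i j l h1 h2
      · exact absurd h2 hjl
      · rcases lt_trichotomy i l with h3 | h3 | h3
        · simpa [min_comm, min_left_comm, min_assoc] using h i l j h3 h2
        · exact absurd h3 hil
        · simpa [min_comm, min_left_comm, min_assoc] using h l i j h3 h1
    · exact absurd h1 hij
    · rcases lt_trichotomy i l with h3 | h3 | h3
      · simpa [min_comm, min_left_comm, min_assoc] using h j i l h1 h3
      · exact absurd h3 hil
      · rcases lt_trichotomy j l with h2 | h2 | h2
        · simpa [min_comm, min_left_comm, min_assoc] using h j l i h2 h3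
        · exact absurd h2 hjl
        · simpa [min_comm, min_left_comm, min_assoc] using h l j i h2 h1
  set N := Finset.univ.sup e + Finset.univ.sup f + 1 with hN
  have he : ∀ i, e i ≤ N := fun i =>
    le_trans (Finset.le_sup (Finset.mem_univ i)) (by omega)
  have hf : ∀ i, f i ≤ N := fun i =>
    le_trans (Finset.le_sup (Finset.mem_univ i)) (by omega)
  have hsum : ∀ g : Fin n → ℕ, (∀ i, g i ≤ N) →
      ∑ i, g i = ∑ t ∈ Finset.range N, ∑ i, (if t < g i then 1 else 0) := by
    intro g hg
    rw [Finset.sum_comm]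
    exact Finset.sum_congr rfl fun i _ => (count_lt N (g i) (hg i)).symm
  have hpair : ∀ g : Fin n → ℕ, (∀ i, g i ≤ N) →
      (∑ p ∈ Finset.univ.filter (fun p : Fin n × Fin n => p.1 < p.2), min (g p.1) (g p.2))
      = ∑ t ∈ Finset.range N, ∑ p ∈ Finset.univ.filter (fun p : Fin n × Fin n => p.1 < p.2),
          (if t < g p.1 ∧ t < g p.2 then 1 else 0) := by
    intro g hg
    rw [Finset.sum_comm]
    refine Finset.sum_congr rfl fun p _ => ?_
    rw [show (∑ t ∈ Finset.range N, if t < g p.1 ∧ t < g p.2 then 1 else 0)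
        = ∑ t ∈ Finset.range N, if t < min (g p.1) (g p.2) then 1 else 0 from
      Finset.sum_congr rfl fun t _ => by rw [if_congr lt_min_iff.symm rfl rfl]]
    exact (count_lt N _ (le_trans (min_le_left _ _) (hg p.1))).symm
  have hsup : ∀ g : Fin n → ℕ, (∀ i, g i ≤ N) →
      Finset.univ.sup g = ∑ t ∈ Finset.range N, (if ∃ i, t < g i then 1 else 0) := by
    intro g hg
    rw [show (∑ t ∈ Finset.range N, if ∃ i, t < g i then 1 else 0)
        = ∑ t ∈ Finset.range N, if t < Finset.univ.sup g then 1 else 0 from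
      Finset.sum_congr rfl fun t _ => by
        have hiff : (∃ i, t < g i) ↔ t < Finset.univ.sup g := by
          rw [Finset.lt_sup_iff]; simp
        rw [if_congr hiff rfl rfl]]
    exact (count_lt N _ (Finset.sup_le fun i _ => hg i)).symm
  rw [hsum e he, hsum f hf, hpair e he, hpair f hf, hsup e he, hsup f hf,
    ← Finset.sum_add_distrib, ← Finset.sum_add_distrib,
    ← Finset.sum_add_distrib, ← Finset.sum_add_distrib]
  refine Finset.sum_congr rfl fun t _ => ?_
  have hA : ∀ g : Fin n → ℕ,
      (∑ i, if t < g i then (1:ℕ) else 0) = (Finset.univ.filter (fun i => t < g i)).card := by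
    intro g; rw [Finset.sum_boole]; simp
  have hP : ∀ g : Fin n → ℕ,
      (∑ p ∈ Finset.univ.filter (fun p : Fin n × Fin n => p.1 < p.2),
        if t < g p.1 ∧ t < g p.2 then (1:ℕ) else 0)
      = ((Finset.univ.filter (fun p : Fin n × Fin n => p.1 < p.2)).filter
          (fun p => p.1 ∈ Finset.univ.filter (fun i => t < g i)
            ∧ p.2 ∈ Finset.univ.filter (fun i => t < g i))).card := by
    intro g
    rw [Finset.sum_boole]
    norm_cast
    congr 1
    apply Finset.filter_congr
    intro p _
    simp
  have hS : ∀ g : Fin n → ℕ,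
      (if ∃ i, t < g i then (1:ℕ) else 0)
      = (if (Finset.univ.filter (fun i => t < g i)).Nonempty then 1 else 0) := by
    intro g
    have hiff : (∃ i, t < g i) ↔ (Finset.univ.filter (fun i => t < g i)).Nonempty := by
      rw [Finset.filter_nonempty_iff]; simp
    rw [if_congr hiff rfl rfl]
  rw [hA e, hA f, hP e, hP f, hS e, hS f]
  apply perSet
  intro i j l hij hil hjl
  have := h' i j l hij hil hjl
  simp only [Finset.mem_filter, Finset.mem_univ, true_and]
  constructor
  · rintro ⟨h1, h2, h3⟩
    have h4 : t < min (e i) (min (e j) (e l)) := lt_min_iff.mpr ⟨h1, lt_min_iff.mpr ⟨h2, h3⟩⟩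
    rw [this] at h4
    simp only [lt_min_iff] at h4
    exact ⟨h4.1, h4.2.1, h4.2.2⟩
  · rintro ⟨h1, h2, h3⟩
    have h4 : t < min (f i) (min (f j) (f l)) := lt_min_iff.mpr ⟨h1, lt_min_iff.mpr ⟨h2, h3⟩⟩
    rw [← this] at h4
    simp only [lt_min_iff] at h4
    exact ⟨h4.1, h4.2.1, h4.2.2⟩

lemma lcm_fact {ι : Type*} [DecidableEq ι] (a : ι → ℕ) (ha : ∀ i, a i ≠ 0)
    (s : Finset ι) :
    s.lcm a ≠ 0 ∧
      ∀ p : ℕ, (s.lcm a).factorization p = s.sup (fun i => (a i).factorization p) := by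
  induction s using Finset.induction_on with
  | empty => simp [Finset.lcm_empty]
  | insert x s hx ih =>
    obtain ⟨hne, hfa⟩ := ih
    rw [Finset.lcm_insert]
    have hlcm : lcm (a x) (s.lcm a) = Nat.lcm (a x) (s.lcm a) := rfl
    constructor
    · rw [hlcm]
      exact Nat.lcm_ne_zero (ha x) hne
    · intro p
      rw [hlcm, Nat.factorization_lcm (ha x) hne, Finset.sup_insert, Finsupp.sup_apply, hfa p]

theorem stmt2 (n : ℕ) (a b : Fin n → ℕ) (ha : ∀ i, 0 < a i) (hb : ∀ i, 0 < b i)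
    (h : ∀ i j l : Fin n, i < j → j < l →
      Nat.gcd (a i) (Nat.gcd (a j) (a l)) = Nat.gcd (b i) (Nat.gcd (b j) (b l))) :
    (1 / ∏ p ∈ Finset.univ.filter (fun p : Fin n × Fin n => p.1 < p.2),
        ((Nat.gcd (a p.1) (a p.2) : ℕ) : ℚ)) *
      ((∏ i, (a i : ℚ)) / ((Finset.univ.lcm a : ℕ) : ℚ)) =
    (1 / ∏ p ∈ Finset.univ.filter (fun p : Fin n × Fin n => p.1 < p.2),
        ((Nat.gcd (b p.1) (b p.2) : ℕ) : ℚ)) *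
      ((∏ i, (b i : ℚ)) / ((Finset.univ.lcm b : ℕ) : ℚ)) := by
  have ha' : ∀ i, a i ≠ 0 := fun i => (ha i).ne'
  have hb' : ∀ i, b i ≠ 0 := fun i => (hb i).ne'
  obtain ⟨hLa, hFa⟩ := lcm_fact a ha' Finset.univ
  obtain ⟨hLb, hFb⟩ := lcm_fact b hb' Finset.univ
  have hga : ∀ p : Fin n × Fin n, Nat.gcd (a p.1) (a p.2) ≠ 0 := fun p => by
    simp [Nat.gcd_eq_zero_iff, ha' p.1]
  have hgb : ∀ p : Fin n × Fin n, Nat.gcd (b p.1) (b p.2) ≠ 0 := fun p => by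
    simp [Nat.gcd_eq_zero_iff, hb' p.1]
  have hPa : (∏ p ∈ Finset.univ.filter (fun p : Fin n × Fin n => p.1 < p.2),
      Nat.gcd (a p.1) (a p.2)) ≠ 0 := Finset.prod_ne_zero_iff.mpr fun p _ => hga p
  have hPb : (∏ p ∈ Finset.univ.filter (fun p : Fin n × Fin n => p.1 < p.2),
      Nat.gcd (b p.1) (b p.2)) ≠ 0 := Finset.prod_ne_zero_iff.mpr fun p _ => hgb p
  have hprodA : (∏ i, a i) ≠ 0 := Finset.prod_ne_zero_iff.mpr fun i _ => ha' i
  have hprodB : (∏ i, b i) ≠ 0 := Finset.prod_ne_zero_iff.mpr fun i _ => hb' i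
  have key : (∏ i, a i) * ((∏ p ∈ Finset.univ.filter (fun p : Fin n × Fin n => p.1 < p.2),
        Nat.gcd (b p.1) (b p.2)) * Finset.univ.lcm b)
      = (∏ i, b i) * ((∏ p ∈ Finset.univ.filter (fun p : Fin n × Fin n => p.1 < p.2),
        Nat.gcd (a p.1) (a p.2)) * Finset.univ.lcm a) := by
    apply Nat.eq_of_factorization_eq
      (mul_ne_zero hprodA (mul_ne_zero hPb hLb))
      (mul_ne_zero hprodB (mul_ne_zero hPa hLa))
    intro q
    by_cases hq : q.Prime
    · have expand : ∀ (c : Fin n → ℕ) (d : Fin n → ℕ), (∀ i, c i ≠ 0) → (∀ i, d i ≠ 0) →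
          (∀ Lc, Lc = Finset.univ.lcm d →
          ((∏ i, c i) * ((∏ p ∈ Finset.univ.filter (fun p : Fin n × Fin n => p.1 < p.2),
            Nat.gcd (d p.1) (d p.2)) * Lc)).factorization q
          = (∑ i, (c i).factorization q)
            + ((∑ p ∈ Finset.univ.filter (fun p : Fin n × Fin n => p.1 < p.2),
                min ((d p.1).factorization q) ((d p.2).factorization q))
              + Finset.univ.sup (fun i => (d i).factorization q))) := by
        intro c d hc hd Lc hLc
        have hdg : ∀ p : Fin n × Fin n, Nat.gcd (d p.1) (d p.2) ≠ 0 := fun p => by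
          simp [Nat.gcd_eq_zero_iff, hd p.1]
        have hPd : (∏ p ∈ Finset.univ.filter (fun p : Fin n × Fin n => p.1 < p.2),
            Nat.gcd (d p.1) (d p.2)) ≠ 0 := Finset.prod_ne_zero_iff.mpr fun p _ => hdg p
        have hLd : Lc ≠ 0 := hLc ▸ (lcm_fact d hd Finset.univ).1
        have hPc : (∏ i, c i) ≠ 0 := Finset.prod_ne_zero_iff.mpr fun i _ => hc i
        rw [Nat.factorization_mul hPc (mul_ne_zero hPd hLd),
          Nat.factorization_mul hPd hLd,
          Nat.factorization_prod (fun i _ => hc i),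
          Nat.factorization_prod (fun p _ => hdg p)]
        simp only [Finsupp.add_apply, Finset.sum_apply']
        have h1 : (∑ p ∈ Finset.univ.filter (fun p : Fin n × Fin n => p.1 < p.2),
            ((Nat.gcd (d p.1) (d p.2)).factorization) q)
            = ∑ p ∈ Finset.univ.filter (fun p : Fin n × Fin n => p.1 < p.2),
              min ((d p.1).factorization q) ((d p.2).factorization q) := by
          refine Finset.sum_congr rfl fun p _ => ?_
          rw [Nat.factorization_gcd (hd p.1) (hd p.2), Finsupp.inf_apply]
        rw [h1, hLc, (lcm_fact d hd Finset.univ).2 q]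
      rw [expand a b ha' hb' _ rfl, expand b a hb' ha' _ rfl]
      have hmins : ∀ i j l : Fin n, i < j → j < l →
          min ((a i).factorization q) (min ((a j).factorization q) ((a l).factorization q))
          = min ((b i).factorization q) (min ((b j).factorization q) ((b l).factorization q)) := by
        intro i j l hij hjl
        have hg2a : Nat.gcd (a j) (a l) ≠ 0 := by simp [Nat.gcd_eq_zero_iff, ha' j]
        have hg2b : Nat.gcd (b j) (b l) ≠ 0 := by simp [Nat.gcd_eq_zero_iff, hb' j]
        have hq1 := congrArg (fun m : ℕ => m.factorization q) (h i j l hij hjl)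
        rw [Nat.factorization_gcd (ha' i) hg2a, Nat.factorization_gcd (ha' j) (ha' l),
          Nat.factorization_gcd (hb' i) hg2b, Nat.factorization_gcd (hb' j) (hb' l)] at hq1
        simpa [Finsupp.inf_apply] using hq1
      have := tripleKey n (fun i => (a i).factorization q) (fun i => (b i).factorization q) hmins
      omega
    · rw [Nat.factorization_eq_zero_of_not_prime _ hq,
        Nat.factorization_eq_zero_of_not_prime _ hq]
  rw [div_mul_div_comm, div_mul_div_comm, one_mul, one_mul, div_eq_div_iff]
  · exact_mod_cast (by exact_mod_cast congrArg (fun m : ℕ => (m : ℚ)) key :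
      ((∏ i, (a i:ℚ)) * ((∏ p ∈ Finset.univ.filter (fun p : Fin n × Fin n => p.1 < p.2),
        ((Nat.gcd (b p.1) (b p.2):ℕ):ℚ)) * ((Finset.univ.lcm b : ℕ):ℚ))
      = (∏ i, (b i:ℚ)) * ((∏ p ∈ Finset.univ.filter (fun p : Fin n × Fin n => p.1 < p.2),
        ((Nat.gcd (a p.1) (a p.2):ℕ):ℚ)) * ((Finset.univ.lcm a : ℕ):ℚ))))
  · refine mul_ne_zero ?_ ?_
    · exact_mod_cast fun hh => hPa (by exact_mod_cast hh)
    · exact_mod_cast Nat.cast_ne_zero.mpr hLa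
  · refine mul_ne_zero ?_ ?_
    · exact_mod_cast fun hh => hPb (by exact_mod_cast hh)
    · exact_mod_cast Nat.cast_ne_zero.mpr hLb
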